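/- Let Γ be a δ-hyperbolic Cayley graph of a group G with finite generating set S, with bipartite Cayley graph, and define the horosphere graph Γ_β for β(g) = ‖g‖ − n: vertices are g with ‖g‖ = n and C(g) infinite, with an edge between g and h whenever there exist geodesic rays from g and h staying at bounded distance. Then any edge {g,h} of Γ_β satisfies ‖g⁻¹h‖ ≤ 2δ; in particular Γ_β has degree bounded by #B(2δ), uniformly in n. -/

import Mathlib

/-- Word length of `g` with respect to the generating set `S`. -/
noncomputable def wordLength {G : Type*} [Group G] (S : Set G) (g : G) : ℕ :=
  sInf {n | ∃ w : List G, (∀ x ∈ w, x ∈ S) ∧ w.length = n ∧ w.prod = g}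

/-- The Cayley graph of `(G, S)`. -/
def cayley (G : Type*) [Group G] (S : Set G) : SimpleGraph G :=
  SimpleGraph.fromRel (fun g h => g⁻¹ * h ∈ S)

/-- The cone of `g`. -/
def cone {G : Type*} [Group G] (S : Set G) (g : G) : Set G :=
  {x : G | wordLength S x = wordLength S g + wordLength S (g⁻¹ * x)}

/-- `p` is a geodesic segment of length `n`. -/
def IsGeodesicSeg {V : Type*} (G : SimpleGraph V) (n : ℕ) (p : ℕ → V) : Prop :=
  (∀ i < n, G.Adj (p i) (p (i + 1))) ∧
  ∀ i j : ℕ, i ≤ j → j ≤ n → G.dist (p i) (p j) = j - i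

/-- `G` has `δ`-thin triangles. -/
def ThinTriangles {V : Type*} (G : SimpleGraph V) (δ : ℕ) : Prop :=
  ∀ (x y z : V) (nxy nyz nxz : ℕ) (pxy pyz pxz : ℕ → V),
    IsGeodesicSeg G nxy pxy → pxy 0 = x → pxy nxy = y →
    IsGeodesicSeg G nyz pyz → pyz 0 = y → pyz nyz = z →
    IsGeodesicSeg G nxz pxz → pxz 0 = x → pxz nxz = z →
    ∀ i ≤ nxz, ∃ j : ℕ,
      (j ≤ nxy ∧ G.dist (pxz i) (pxy j) ≤ δ) ∨
      (j ≤ nyz ∧ G.dist (pxz i) (pyz j) ≤ δ)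

/-- The edge relation of the horosphere graph `Γ_β` for `β(g) = ‖g‖ − n`:
`g ≠ h` on the sphere of radius `n` with infinite cones, joined whenever there
are geodesic rays starting at `g`, `h` that remain at bounded distance. -/
def horoEdge {G : Type*} [Group G] (S : Set G) (n : ℕ) (g h : G) : Prop :=
  g ≠ h ∧ wordLength S g = n ∧ wordLength S h = n ∧
  (cone S g).Infinite ∧ (cone S h).Infinite ∧
  ∃ (r s : ℕ → G) (K : ℕ), r 0 = g ∧ s 0 = h ∧
    (∀ m : ℕ, (r m)⁻¹ * r (m + 1) ∈ S) ∧
    (∀ m : ℕ, wordLength S (r m) = n + m) ∧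
    (∀ m : ℕ, (s m)⁻¹ * s (m + 1) ∈ S) ∧
    (∀ m : ℕ, wordLength S (s m) = n + m) ∧
    (∀ m : ℕ, wordLength S ((r m)⁻¹ * s m) ≤ K)

section AuxA
variable {G : Type*} [Group G] {S : Set G}
variable {G : Type*} [Group G] {S : Set G}

lemma wl_le {g : G} (w : List G) (hw : ∀ x ∈ w, x ∈ S) (hp : w.prod = g) :
    wordLength S g ≤ w.length :=
  Nat.sInf_le ⟨w, hw, rfl, hp⟩

lemma exists_word (hsymm : S⁻¹ = S) (hgen : Subgroup.closure S = ⊤) (g : G) :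
    ∃ w : List G, (∀ x ∈ w, x ∈ S) ∧ w.prod = g := by
  have hg : g ∈ Subgroup.closure S := hgen ▸ Subgroup.mem_top g
  induction hg using Subgroup.closure_induction with
  | mem x hx => exact ⟨[x], by simpa using hx, by simp⟩
  | one => exact ⟨[], by simp, by simp⟩
  | mul x y _ _ hx hy =>
      obtain ⟨w1, h1, e1⟩ := hx
      obtain ⟨w2, h2, e2⟩ := hy
      refine ⟨w1 ++ w2, ?_, by simp [e1, e2]⟩
      intro x hx
      rcases List.mem_append.mp hx with h | h
      exacts [h1 x h, h2 x h]
  | inv x _ hx =>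
      obtain ⟨w, h1, e1⟩ := hx
      refine ⟨(w.map fun x => x⁻¹).reverse, ?_, by rw [← List.prod_inv_reverse, e1]⟩
      intro y hy
      simp only [List.mem_reverse, List.mem_map] at hy
      obtain ⟨z, hz, rfl⟩ := hy
      rw [← hsymm]; simpa using h1 z hz

lemma exists_min_word (hsymm : S⁻¹ = S) (hgen : Subgroup.closure S = ⊤) (g : G) :
    ∃ w : List G, (∀ x ∈ w, x ∈ S) ∧ w.length = wordLength S g ∧ w.prod = g := by
  obtain ⟨w, hw, hp⟩ := exists_word hsymm hgen g
  have hne : {n | ∃ w : List G, (∀ x ∈ w, x ∈ S) ∧ w.length = n ∧ w.prod = g}.Nonempty :=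
    ⟨w.length, w, hw, rfl, hp⟩
  exact Nat.sInf_mem hne

lemma wl_one : wordLength S (1 : G) = 0 :=
  Nat.le_zero.mp (wl_le [] (by simp) (by simp))

lemma wl_mul (hsymm : S⁻¹ = S) (hgen : Subgroup.closure S = ⊤) (a b : G) :
    wordLength S (a * b) ≤ wordLength S a + wordLength S b := by
  obtain ⟨w1, h1, l1, e1⟩ := exists_min_word hsymm hgen a
  obtain ⟨w2, h2, l2, e2⟩ := exists_min_word hsymm hgen b
  have := wl_le (S := S) (g := a * b) (w1 ++ w2)
    (by intro x hx; rcases List.mem_append.mp hx with h|h; exacts [h1 x h, h2 x h])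
    (by simp [e1, e2])
  simpa [l1, l2] using this

lemma wl_gen_le_one {x : G} (hx : x ∈ S) : wordLength S x ≤ 1 := by
  simpa using wl_le [x] (by simpa using hx) (by simp)

lemma wl_inv (hsymm : S⁻¹ = S) (hgen : Subgroup.closure S = ⊤) (g : G) :
    wordLength S g⁻¹ = wordLength S g := by
  have key : ∀ a : G, wordLength S a⁻¹ ≤ wordLength S a := by
    intro a
    obtain ⟨w, hw, lw, ew⟩ := exists_min_word hsymm hgen a
    have := wl_le (S := S) (g := a⁻¹) ((w.map fun x => x⁻¹).reverse)
      (by intro y hy; simp only [List.mem_reverse, List.mem_map] at hy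
          obtain ⟨z, hz, rfl⟩ := hy
          rw [← hsymm]; simpa using hw z hz)
      (by rw [← List.prod_inv_reverse, ew])
    simpa [lw] using this
  exact le_antisymm (key g) (by simpa using key g⁻¹)

lemma cayley_adj (hsymm : S⁻¹ = S) {x y : G} :
    (cayley G S).Adj x y ↔ x ≠ y ∧ x⁻¹ * y ∈ S := by
  constructor
  · rintro ⟨hne, h | h⟩
    · exact ⟨hne, h⟩
    · refine ⟨hne, ?_⟩
      have : (y⁻¹ * x)⁻¹ ∈ S⁻¹ := Set.inv_mem_inv.mpr h
      rw [hsymm] at this; simpa using this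
  · rintro ⟨hne, h⟩
    exact ⟨hne, Or.inl h⟩

lemma reach_word (x : G) : ∀ (w : List G), (∀ t ∈ w, t ∈ S) →
    (cayley G S).Reachable x (x * w.prod) := by
  intro w
  induction w generalizing x with
  | nil => intro _; simpa using SimpleGraph.Reachable.refl x
  | cons t w ih =>
    intro h
    have h2 : (cayley G S).Reachable (x * t) (x * t * w.prod) :=
      ih (x * t) (fun u hu => h u (List.mem_cons_of_mem _ hu))
    have step : (cayley G S).Reachable x (x * t) := by
      by_cases ht : x = x * t
      · rw [← ht]
      · exact SimpleGraph.Adj.reachable ⟨ht, Or.inl (by simpa using h t (List.mem_cons_self))⟩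
    have := step.trans h2
    simpa [mul_assoc] using this

lemma cayley_connected (hsymm : S⁻¹ = S) (hgen : Subgroup.closure S = ⊤) :
    (cayley G S).Connected := by
  have hpre : (cayley G S).Preconnected := by
    intro x y
    obtain ⟨w, hw, hp⟩ := exists_word hsymm hgen (x⁻¹ * y)
    have := reach_word x w hw
    rw [hp] at this
    simpa using this
  have : Nonempty G := ⟨1⟩
  exact SimpleGraph.Connected.mk hpre

lemma dist_le_word (hconn : (cayley G S).Connected) (x : G) :
    ∀ (w : List G), (∀ t ∈ w, t ∈ S) → (cayley G S).dist x (x * w.prod) ≤ w.length := by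
  intro w
  induction w generalizing x with
  | nil => intro _; simp [SimpleGraph.dist_self]
  | cons t w ih =>
    intro h
    have h2 : (cayley G S).dist (x * t) (x * t * w.prod) ≤ w.length :=
      ih (x * t) (fun u hu => h u (List.mem_cons_of_mem _ hu))
    have step : (cayley G S).dist x (x * t) ≤ 1 := by
      by_cases ht : x = x * t
      · rw [← ht]; simp [SimpleGraph.dist_self]
      · have : (cayley G S).Adj x (x * t) :=
          ⟨ht, Or.inl (by simpa using h t (List.mem_cons_self))⟩
        simp [SimpleGraph.dist_eq_one_iff_adj.mpr this]
    calc (cayley G S).dist x (x * (t :: w).prod)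
        = (cayley G S).dist x (x * t * w.prod) := by rw [List.prod_cons, ← mul_assoc]
      _ ≤ (cayley G S).dist x (x * t) + (cayley G S).dist (x * t) (x * t * w.prod) :=
          hconn.dist_triangle
      _ ≤ 1 + w.length := Nat.add_le_add step h2
      _ = (t :: w).length := by simp [Nat.add_comm]

lemma wl_le_walk (hsymm : S⁻¹ = S) (hgen : Subgroup.closure S = ⊤) :
    ∀ {x y : G} (p : (cayley G S).Walk x y), wordLength S (x⁻¹ * y) ≤ p.length := by
  intro x y p
  induction p with
  | nil => simpa using Nat.le_of_eq (wl_one (S := S))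
  | @cons a b c hadj q ih =>
    have hab : a⁻¹ * b ∈ S := ((cayley_adj hsymm).mp hadj).2
    calc wordLength S (a⁻¹ * c) = wordLength S ((a⁻¹ * b) * (b⁻¹ * c)) := by
          rw [mul_assoc, ← mul_assoc (a⁻¹) b, ]; group
      _ ≤ wordLength S (a⁻¹ * b) + wordLength S (b⁻¹ * c) := wl_mul hsymm hgen _ _
      _ ≤ 1 + q.length := Nat.add_le_add (wl_gen_le_one hab) ih
      _ = (SimpleGraph.Walk.cons hadj q).length := by simp [Nat.add_comm]

lemma dist_eq_wl (hsymm : S⁻¹ = S) (hgen : Subgroup.closure S = ⊤) (x y : G) :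
    (cayley G S).dist x y = wordLength S (x⁻¹ * y) := by
  have hconn := cayley_connected hsymm hgen
  refine le_antisymm ?_ ?_
  · obtain ⟨w, hw, lw, ew⟩ := exists_min_word hsymm hgen (x⁻¹ * y)
    have := dist_le_word hconn x w hw
    rw [ew] at this
    simpa [lw] using this
  · obtain ⟨p, hp⟩ := hconn.exists_walk_length_eq_dist x y
    rw [← hp]
    exact wl_le_walk hsymm hgen p

variable {G : Type*} [Group G] {S : Set G}

lemma wl_lower (hsymm : S⁻¹ = S) (hgen : Subgroup.closure S = ⊤) (x y : G) :
    wordLength S y ≤ wordLength S x + (cayley G S).dist x y := by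
  rw [dist_eq_wl hsymm hgen]
  have := wl_mul hsymm hgen x (x⁻¹ * y)
  simpa using this

lemma chain_dist (hconn : (cayley G S).Connected) (p : ℕ → G) (N : ℕ)
    (hadj : ∀ k < N, (cayley G S).Adj (p k) (p (k + 1))) :
    ∀ i j, i ≤ j → j ≤ N → (cayley G S).dist (p i) (p j) ≤ j - i := by
  intro i j hij hjN
  induction j, hij using Nat.le_induction with
  | base => simp [SimpleGraph.dist_self]
  | succ j hij ih =>
    have h1 : (cayley G S).dist (p j) (p (j + 1)) ≤ 1 := by
      have := hadj j (by omega)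
      simp [SimpleGraph.dist_eq_one_iff_adj.mpr this]
    calc (cayley G S).dist (p i) (p (j + 1))
        ≤ (cayley G S).dist (p i) (p j) + (cayley G S).dist (p j) (p (j + 1)) :=
          hconn.dist_triangle
      _ ≤ (j - i) + 1 := Nat.add_le_add (ih (by omega)) h1
      _ = (j + 1) - i := by omega

lemma geo_of_norm (hsymm : S⁻¹ = S) (hgen : Subgroup.closure S = ⊤) (p : ℕ → G) (N c : ℕ)
    (hadj : ∀ k < N, (cayley G S).Adj (p k) (p (k + 1)))
    (hnorm : ∀ i ≤ N, wordLength S (p i) = c + i) :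
    IsGeodesicSeg (cayley G S) N p := by
  have hconn := cayley_connected hsymm hgen
  refine ⟨hadj, fun i j hij hjN => ?_⟩
  have h1 : (cayley G S).dist (p i) (p j) ≤ j - i := chain_dist hconn p N hadj i j hij hjN
  have h2 : wordLength S (p j) ≤ wordLength S (p i) + (cayley G S).dist (p i) (p j) :=
    wl_lower hsymm hgen _ _
  rw [hnorm i (le_trans hij hjN), hnorm j hjN] at h2
  omega

lemma exists_geo (hsymm : S⁻¹ = S) (hgen : Subgroup.closure S = ⊤) (x y : G) :
    ∃ q : ℕ → G, q 0 = x ∧ q ((cayley G S).dist x y) = y ∧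
      IsGeodesicSeg (cayley G S) ((cayley G S).dist x y) q := by
  have hconn := cayley_connected hsymm hgen
  obtain ⟨w, hw⟩ := hconn.exists_walk_length_eq_dist x y
  set L := (cayley G S).dist x y with hL
  refine ⟨fun i => w.getVert i, w.getVert_zero, by rw [← hw]; exact w.getVert_length, ?_, ?_⟩
  · intro k hk
    exact w.adj_getVert_succ (by omega)
  · intro i j hij hjL
    show (cayley G S).dist (w.getVert i) (w.getVert j) = j - i
    have hadj : ∀ k < L, (cayley G S).Adj (w.getVert k) (w.getVert (k + 1)) :=
      fun k hk => w.adj_getVert_succ (by omega)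
    have h1 : (cayley G S).dist (w.getVert i) (w.getVert j) ≤ j - i :=
      chain_dist hconn _ L hadj i j hij hjL
    have h2 : (cayley G S).dist x (w.getVert i) ≤ i - 0 := by
      have := chain_dist hconn _ L hadj 0 i (by omega) (le_trans hij hjL)
      simpa [w.getVert_zero] using this
    have h3 : (cayley G S).dist (w.getVert j) y ≤ L - j := by
      have := chain_dist hconn _ L hadj j L hjL le_rfl
      rw [← hw] at this ⊢
      simpa [w.getVert_length] using this
    have h4 : L ≤ (cayley G S).dist x (w.getVert i) +
        ((cayley G S).dist (w.getVert i) (w.getVert j) + (cayley G S).dist (w.getVert j) y) :=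
      le_trans hconn.dist_triangle (Nat.add_le_add_left hconn.dist_triangle _)
    omega

lemma ray_extension (hsymm : S⁻¹ = S) (hgen : Subgroup.closure S = ⊤) {g : G} {n : ℕ}
    (hg : wordLength S g = n) (r : ℕ → G) (hr0 : r 0 = g)
    (hstep : ∀ m, (r m)⁻¹ * r (m + 1) ∈ S) (hnorm : ∀ m, wordLength S (r m) = n + m) (M : ℕ) :
    ∃ a : ℕ → G, a 0 = 1 ∧ a n = g ∧ a (n + M) = r M ∧
      (∀ i ≤ n + M, wordLength S (a i) = i) ∧
      IsGeodesicSeg (cayley G S) (n + M) a := by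
  obtain ⟨w, hw, lw, ew⟩ := exists_min_word hsymm hgen g
  rw [hg] at lw
  set a : ℕ → G := fun i => if i ≤ n then (w.take i).prod else r (i - n) with ha
  have htake : ∀ i ≤ n, wordLength S ((w.take i).prod) = i := by
    intro i hi
    have hle : wordLength S ((w.take i).prod) ≤ i := by
      have := wl_le (S := S) (w.take i) (fun x hx => hw x (List.mem_of_mem_take hx)) rfl
      rwa [List.length_take, min_eq_left (lw ▸ hi)] at this
    have hdrop : wordLength S ((w.drop i).prod) ≤ n - i := by
      have := wl_le (S := S) (w.drop i) (fun x hx => hw x (List.mem_of_mem_drop hx)) rfl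
      rwa [List.length_drop, lw] at this
    have hmul := wl_mul hsymm hgen ((w.take i).prod) ((w.drop i).prod)
    rw [List.prod_take_mul_prod_drop, ew, hg] at hmul
    omega
  have han : a n = g := by simp [ha, List.take_of_length_le (le_of_eq lw), ew]
  have hru : ∀ i, n ≤ i → a i = r (i - n) := by
    intro i hi
    rcases eq_or_lt_of_le hi with h | h
    · rw [ha]; simp only [← h, le_refl, if_pos, Nat.sub_self]
      rw [List.take_of_length_le (le_of_eq lw), ew, hr0]
    · simp [ha, Nat.not_le.mpr h]
  have hnorma : ∀ i ≤ n + M, wordLength S (a i) = i := by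
    intro i hi
    by_cases h : i ≤ n
    · simp only [ha, if_pos h]; exact htake i h
    · rw [hru i (by omega), hnorm]; omega
  have hadj : ∀ k < n + M, (cayley G S).Adj (a k) (a (k + 1)) := by
    intro k hk
    have hne : a k ≠ a (k + 1) := by
      intro h
      have h1 := hnorma k (by omega)
      have h2 := hnorma (k + 1) (by omega)
      rw [h] at h1; omega
    rw [cayley_adj hsymm]
    refine ⟨hne, ?_⟩
    by_cases h : k + 1 ≤ n
    · have hk' : k ≤ n := by omega
      have hkw : k < w.length := by omega
      simp only [ha, if_pos h, if_pos hk']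
      rw [List.prod_take_succ w k hkw]
      rw [inv_mul_cancel_left]
      exact hw _ (List.getElem_mem hkw)
    · rw [hru k (by omega), hru (k + 1) (by omega)]
      have : k + 1 - n = (k - n) + 1 := by omega
      rw [this]
      exact hstep (k - n)
  exact ⟨a, by simp [ha, wl_one], han, by
      rw [hru (n + M) (by omega)]; congr 1; omega,
    hnorma, geo_of_norm hsymm hgen a (n + M) 0 hadj (by simpa using hnorma)⟩

variable {G : Type*} [Group G] {S : Set G}

lemma horo_short (hsymm : S⁻¹ = S) (hgen : Subgroup.closure S = ⊤)
    {δ : ℕ} (hδ : ThinTriangles (cayley G S) δ) {n : ℕ} {g h : G}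
    (e : horoEdge S n g h) : wordLength S (g⁻¹ * h) ≤ 2 * δ := by
  obtain ⟨hne, hgn, hhn, -, -, r, s, K, hr0, hs0, hrstep, hrnorm, hsstep, hsnorm, hK⟩ := e
  set M : ℕ := K + δ + 1 with hM
  obtain ⟨a, ha0, han, haM, hanorm, hageo⟩ :=
    ray_extension hsymm hgen hgn r hr0 hrstep hrnorm M
  obtain ⟨b, hb0, hbn, hbM, hbnorm, hbgeo⟩ :=
    ray_extension hsymm hgen hhn s hs0 hsstep hsnorm M
  set K' : ℕ := (cayley G S).dist (s M) (r M) with hK'def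
  have hK' : K' ≤ K := by
    rw [hK'def, dist_eq_wl hsymm hgen]
    calc wordLength S ((s M)⁻¹ * r M) = wordLength S (((r M)⁻¹ * s M)⁻¹) := by group
      _ = wordLength S ((r M)⁻¹ * s M) := wl_inv hsymm hgen _
      _ ≤ K := hK M
  obtain ⟨top, htop0, htopK, htopgeo⟩ := exists_geo hsymm hgen (s M) (r M)
  obtain ⟨j, hj⟩ := hδ 1 (s M) (r M) (n + M) K' (n + M) b top a
    hbgeo hb0 hbM htopgeo htop0 htopK hageo ha0 haM n (by omega)
  rw [han] at hj
  rcases hj with ⟨hjb, hdb⟩ | ⟨hjt, hdt⟩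
  · -- close to the other vertical side b
    have hbj : wordLength S (b j) = j := hbnorm j hjb
    have h1 : wordLength S (b j) ≤ wordLength S g + (cayley G S).dist g (b j) :=
      wl_lower hsymm hgen _ _
    have h2 : wordLength S g ≤ wordLength S (b j) + (cayley G S).dist (b j) g :=
      wl_lower hsymm hgen _ _
    rw [SimpleGraph.dist_comm] at h2
    rw [hbj, hgn] at h1 h2
    have hjn : (cayley G S).dist (b j) h ≤ δ := by
      by_cases hc : j ≤ n
      · have := hbgeo.2 j n hc (by omega)
        rw [hbn] at this; omega
      · have := hbgeo.2 n j (by omega) hjb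
        rw [hbn, SimpleGraph.dist_comm] at this; omega
    have htri : (cayley G S).dist g h ≤
        (cayley G S).dist g (b j) + (cayley G S).dist (b j) h :=
      (cayley_connected hsymm hgen).dist_triangle
    rw [← dist_eq_wl hsymm hgen]
    omega
  · -- close to the top side: impossible
    exfalso
    have h1 : (cayley G S).dist (s M) (top j) = j := by
      have := htopgeo.2 0 j (by omega) hjt
      rw [htop0] at this; omega
    have h2 : wordLength S (s M) ≤ wordLength S g + (cayley G S).dist g (s M) :=
      wl_lower hsymm hgen _ _
    rw [hsnorm, hgn] at h2
    have htri : (cayley G S).dist g (s M) ≤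
        (cayley G S).dist g (top j) + (cayley G S).dist (top j) (s M) :=
      (cayley_connected hsymm hgen).dist_triangle
    rw [SimpleGraph.dist_comm (u := top j)] at htri
    omega

lemma ball_finite (hSfin : S.Finite) (hsymm : S⁻¹ = S) (hgen : Subgroup.closure S = ⊤)
    (m : ℕ) : {k : G | wordLength S k ≤ m}.Finite := by
  induction m with
  | zero =>
    refine Set.Finite.subset (Set.finite_singleton (1 : G)) ?_
    intro k hk
    have hk' : wordLength S k = 0 := Nat.le_zero.mp hk
    obtain ⟨w, hw, lw, ew⟩ := exists_min_word hsymm hgen k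
    have : w.length = 0 := by omega
    have := List.length_eq_zero_iff.mp this
    simp [Set.mem_singleton_iff, ← ew, this]
  | succ m ih =>
    have : {k : G | wordLength S k ≤ m + 1} ⊆
        {k : G | wordLength S k ≤ m} ∪ ⋃ x ∈ S, (· * x) '' {k : G | wordLength S k ≤ m} := by
      intro k hk
      obtain ⟨w, hw, lw, ew⟩ := exists_min_word hsymm hgen k
      by_cases hm : wordLength S k ≤ m
      · exact Or.inl hm
      · right
        have hlen : w.length = m + 1 := by
          simp only [Set.mem_setOf_eq] at hk; omega
        have hwne : w ≠ [] := by intro hnil; rw [hnil] at hlen; simp at hlen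
        refine Set.mem_biUnion (hw _ (List.getLast_mem hwne)) ?_
        refine ⟨w.dropLast.prod, ?_, ?_⟩
        · have := wl_le (S := S) w.dropLast
            (fun x hx => hw x ((List.dropLast_sublist w).subset hx)) rfl
          simp only [Set.mem_setOf_eq]
          have hld : w.dropLast.length = m := by rw [List.length_dropLast, hlen]; simp
          omega
        · show w.dropLast.prod * w.getLast hwne = k
          rw [← ew]
          conv_rhs => rw [← List.dropLast_append_getLast hwne]
          rw [List.prod_append, List.prod_singleton]
    refine Set.Finite.subset (Set.Finite.union ih ?_) this
    exact Set.Finite.biUnion hSfin (fun x _ => ih.image _)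

end AuxA

/-- In a `δ`-hyperbolic bipartite Cayley graph, endpoints of a horosphere-graph
edge satisfy `‖g⁻¹h‖ ≤ 2δ`; consequently the degree of every vertex of the
horosphere graph is bounded by the size of the ball of radius `2δ`, uniformly
in `n`. -/

theorem horosphere_edges_short (G : Type*) [Group G] (S : Set G)
    (hSfin : S.Finite) (hsymm : S⁻¹ = S) (hgen : Subgroup.closure S = ⊤)
    (δ : ℕ) (hδ : ThinTriangles (cayley G S) δ)
    (hbip : ∀ w : List G, (∀ x ∈ w, x ∈ S) → w.prod = 1 → Even w.length)
    (n : ℕ) :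
    (∀ g h : G, horoEdge S n g h → wordLength S (g⁻¹ * h) ≤ 2 * δ) ∧
    (∀ g : G, {h : G | horoEdge S n g h}.ncard ≤
      {k : G | wordLength S k ≤ 2 * δ}.ncard) := by
  constructor
  · intro g h e
    exact horo_short hsymm hgen hδ e
  · intro g
    have hsub : (fun h => g⁻¹ * h) '' {h : G | horoEdge S n g h} ⊆
        {k : G | wordLength S k ≤ 2 * δ} := by
      rintro k ⟨h, hh, rfl⟩
      exact horo_short hsymm hgen hδ hh
    calc {h : G | horoEdge S n g h}.ncard
        = ((fun h => g⁻¹ * h) '' {h : G | horoEdge S n g h}).ncard :=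
          (Set.ncard_image_of_injective _ (mul_right_injective g⁻¹)).symm
      _ ≤ {k : G | wordLength S k ≤ 2 * δ}.ncard :=
          Set.ncard_le_ncard hsub (ball_finite hSfin hsymm hgen _)
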